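/- Let 𝒜 = Π_{i≥0} 𝒜_i be a complete graded commutative ring with 𝒜_i·𝒜_j ⊆ 𝒜_{i+j}, equipped with a derivation D with D(𝒜_i) ⊆ 𝒜_{i+1}. For k ∈ ℤ let 𝒟_k = { Σ_{i≤k} f_i D^i : f_i ∈ 𝒜_{k−i} } be the homogeneous operators of degree k, and let 𝒟⁺ = ∪_{d∈ℤ} Π_{k≥d} 𝒟_k be the space of pseudo-differential operators of the second type. Then the multiplication determined by (f D^i)·(g D^j) = Σ_{r≥0} binom(i,r) f D^r(g) D^{i+j−r} is well defined on 𝒟⁺ (for each power of D and each graded component of 𝒜 only finitely many terms contribute), satisfies 𝒟_k·𝒟_l ⊆ Π_{m ≥ k+l} 𝒟_m, and makes 𝒟⁺ an associative unital ring. -/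

import Mathlib

/-!
STATEMENT 17.  Let `𝒜 = Π_{i≥0} 𝒜_i` be a complete graded commutative ring
with `𝒜_i·𝒜_j ⊆ 𝒜_{i+j}`, equipped with a derivation `D` with
`D(𝒜_i) ⊆ 𝒜_{i+1}`.  Then on the space `𝒟⁺ = ∪_d Π_{k≥d} 𝒟_k` of
pseudo-differential operators of the second type, the multiplication
determined by `(f D^i)·(g D^j) = Σ_{r≥0} binom(i,r) f D^r(g) D^{i+j−r}` is
well defined (for each power of `D` and each graded component only finitely
many terms contribute), satisfies `𝒟_k·𝒟_l ⊆ Π_{m≥k+l} 𝒟_m`, and makes `𝒟⁺`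
an associative unital ring.

We encode the complete graded ring by a commutative ring `R` together with the
family `gr m : R →+ R` of projections onto the graded components, subject to
the axioms of a (topologically) complete grading: the projections are
orthogonal idempotents, they jointly separate points, every family of
homogeneous components is assembled by some element of `R` (completeness),
`1` is homogeneous of degree `0`, the product is graded, and the derivation
raises degrees by one.  An element of `𝒟⁺` is encoded by its coefficient
function `f : ℤ → R`, the coefficient `f i` of `D^i` being an element of the
complete graded ring `R = Π_j 𝒜_j`.
-/

namespace TwoBKPPlus

/-- The generalized binomial coefficient `binom(i,r) = i(i−1)⋯(i−r+1)/r! ∈ ℤ`. -/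
noncomputable def zchoose (i : ℤ) (r : ℕ) : ℤ := Ring.choose i r

variable {R : Type*} [CommRing R]

/-- `f : ℤ → R` lies in `Π_{k ≥ d} 𝒟_k`: the `𝒜_j`-component of the
coefficient of `D^i` vanishes whenever `j < d − i`. -/
def HomBound (gr : ℕ → R →+ R) (f : ℤ → R) (d : ℤ) : Prop :=
  ∀ (i : ℤ) (j : ℕ), (j : ℤ) < d - i → gr j (f i) = 0

/-- `f : ℤ → R` represents an element of `𝒟⁺ = ∪_d Π_{k≥d} 𝒟_k`. -/
def IsPDOPlus (gr : ℕ → R →+ R) (f : ℤ → R) : Prop := ∃ d : ℤ, HomBound gr f d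

/-- The contribution of the pair `p = (i,j)` to the `𝒜_m`-component of the
coefficient of `D^n` in the product, coming from the rule
`(f_i D^i)·(g_j D^j) = Σ_{r≥0} binom(i,r) f_i D^r(g_j) D^{i+j−r}` with
`r = i + j − n`. -/
noncomputable def prodTerm (gr : ℕ → R →+ R) (D : R → R) (f g : ℤ → R)
    (n : ℤ) (m : ℕ) (p : ℤ × ℤ) : R :=
  if 0 ≤ p.1 + p.2 - n then
    gr m (zchoose p.1 (p.1 + p.2 - n).toNat •
      (f p.1 * D^[(p.1 + p.2 - n).toNat] (g p.2)))
  else 0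

/-- The `𝒜_m`-component of the coefficient of `D^n` in the product. -/
noncomputable def prodCoeff (gr : ℕ → R →+ R) (D : R → R) (f g : ℤ → R)
    (n : ℤ) (m : ℕ) : R :=
  ∑ᶠ p : ℤ × ℤ, prodTerm gr D f g n m p

open Classical in
/-- The product on `𝒟⁺`: the coefficient of `D^n` is the element of
`R = Π_j 𝒜_j` assembling (via completeness) the graded components
`prodCoeff gr D f g n m`. -/
noncomputable def pmulP (gr : ℕ → R →+ R) (D : R → R) (f g : ℤ → R) : ℤ → R :=
  fun n =>
    if h : ∃ a : R, ∀ m : ℕ, gr m a = prodCoeff gr D f g n m then h.choose else 0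

/-- The unit `1 = 1·D⁰` of `𝒟⁺`. -/
def ponep : ℤ → R := fun n => if n = 0 then (1 : R) else 0

end TwoBKPPlus


namespace TwoBKPAux
open Finset

variable {R : Type*} [CommRing R]

structure Gd (gr : ℕ → R →+ R) (D : Derivation ℤ R R) : Prop where
  hidem : ∀ (m : ℕ) (a : R), gr m (gr m a) = gr m a
  horth : ∀ (m m' : ℕ) (a : R), m ≠ m' → gr m (gr m' a) = 0
  hsep : ∀ a b : R, (∀ m : ℕ, gr m a = gr m b) → a = b
  hcomplete : ∀ c : ℕ → R, (∀ m : ℕ, gr m (c m) = c m) → ∃ a : R, ∀ m, gr m a = c m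
  hone : ∀ m : ℕ, gr m (1 : R) = if m = 0 then (1 : R) else 0
  hmul : ∀ (m : ℕ) (a b : R),
    gr m (a * b) = ∑ i ∈ Finset.range (m + 1), gr i a * gr (m - i) b
  hD : ∀ (m : ℕ) (a : R), gr (m + 1) (D a) = D (gr m a)
  hD0 : ∀ a : R, gr 0 (D a) = 0

variable {gr : ℕ → R →+ R} {D : Derivation ℤ R R}

lemma iterD_eq (t : ℕ) (a : R) : (⇑D)^[t] a = (D.toLinearMap ^ t) a := by
  rw [Module.End.pow_apply]
  rfl

lemma iterD_add (t : ℕ) (a b : R) :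
    (⇑D)^[t] (a + b) = (⇑D)^[t] a + (⇑D)^[t] b := by
  simp [iterD_eq]

lemma iterD_zero (t : ℕ) : (⇑D)^[t] (0 : R) = 0 := by simp [iterD_eq]

lemma iterD_zsmul (t : ℕ) (z : ℤ) (a : R) :
    (⇑D)^[t] (z • a) = z • (⇑D)^[t] a := by
  rw [iterD_eq, iterD_eq, map_zsmul]

lemma iterD_sum {α : Type*} (s : Finset α) (F : α → R) (t : ℕ) :
    (⇑D)^[t] (∑ x ∈ s, F x) = ∑ x ∈ s, (⇑D)^[t] (F x) := by
  simp [iterD_eq]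

lemma iterLeibniz (t : ℕ) (a b : R) :
    (⇑D)^[t] (a * b)
      = ∑ c ∈ range (t + 1), (t.choose c : ℤ) • ((⇑D)^[c] a * (⇑D)^[t - c] b) := by
  have H : ∀ (n : ℕ) (a b : R), (⇑D)^[n] (a * b)
      = ∑ ij ∈ antidiagonal n, n.choose ij.1 • ((⇑D)^[ij.1] a * (⇑D)^[ij.2] b) := by
    intro n
    induction n with
    | zero => simp
    | succ n ih =>
      intro a b
      rw [Finset.sum_antidiagonal_choose_succ_nsmul
        (M := R) (fun i j => (⇑D)^[i] a * (⇑D)^[j] b) n]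
      simp only [Function.iterate_succ_apply', ih, map_sum, map_nsmul,
        Derivation.leibniz, smul_eq_mul, smul_add, Finset.sum_add_distrib]
      congr 1
      refine sum_congr rfl fun ij hij => ?_
      rw [n.choose_symm_of_eq_add (mem_antidiagonal.1 hij).symm, mul_comm]
  rw [H, Finset.Nat.sum_antidiagonal_eq_sum_range_succ_mk]
  exact sum_congr rfl fun c _ => by rw [natCast_zsmul]


lemma grD (H : Gd gr D) (r : ℕ) : ∀ (t : ℕ) (a : R),
    gr t ((⇑D)^[r] a) = if r ≤ t then (⇑D)^[r] (gr (t - r) a) else 0 := by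
  induction r with
  | zero => intro t a; simp
  | succ r ih =>
    intro t a
    rw [Function.iterate_succ_apply, ih t (D a)]
    by_cases h1 : r + 1 ≤ t
    · have h2 : r ≤ t := by omega
      rw [if_pos h2, if_pos h1]
      have h3 : t - r = (t - (r + 1)) + 1 := by omega
      rw [h3, H.hD, ← Function.iterate_succ_apply]
    · rw [if_neg h1]
      by_cases h2 : r ≤ t
      · have h3 : t - r = 0 := by omega
        rw [if_pos h2, h3, H.hD0, iterD_zero]
      · rw [if_neg h2]

/-- From a nonvanishing graded component of a product, extract a decomposition. -/
lemma prodDecomp (H : Gd gr D) {m : ℕ} {a b : R} (h : gr m (a * b) ≠ 0) :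
    ∃ μ ν : ℕ, μ + ν = m ∧ gr μ a ≠ 0 ∧ gr ν b ≠ 0 := by
  rw [H.hmul] at h
  obtain ⟨μ, hμ, hne⟩ := Finset.exists_ne_zero_of_sum_ne_zero h
  refine ⟨μ, m - μ, ?_, fun h0 => hne (by rw [h0, zero_mul]),
    fun h0 => hne (by rw [h0, mul_zero])⟩
  have := Finset.mem_range.1 hμ; omega

lemma iterDBound (H : Gd gr D) {ν r : ℕ} {x : R} (h : gr ν ((⇑D)^[r] x) ≠ 0) :
    r ≤ ν ∧ gr (ν - r) x ≠ 0 := by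
  rw [grD H] at h
  by_cases h1 : r ≤ ν
  · exact ⟨h1, fun h0 => h (by rw [if_pos h1, h0, iterD_zero])⟩
  · exact absurd (by rw [if_neg h1]) h

/-- Main nonvanishing bound for triple products. -/
lemma tripleBound (H : Gd gr D) {f g h : ℤ → R} {df dg dh : ℤ}
    (hf : TwoBKPPlus.HomBound gr f df) (hg : TwoBKPPlus.HomBound gr g dg)
    (hh : TwoBKPPlus.HomBound gr h dh) {i j k : ℤ} {a b m : ℕ}
    (hne : gr m (f i * ((⇑D)^[a] (g j) * (⇑D)^[b] (h k))) ≠ 0) :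
    ∃ μ ν₁ ν₂ : ℕ, μ + ν₁ + ν₂ = m ∧ df - i ≤ (μ : ℤ) ∧ (a : ℤ) ≤ ν₁ ∧
      dg - j ≤ (ν₁ : ℤ) - a ∧ (b : ℤ) ≤ ν₂ ∧ dh - k ≤ (ν₂ : ℤ) - b := by
  obtain ⟨μ, ν, hμν, h1, h2⟩ := prodDecomp H hne
  obtain ⟨ν₁, ν₂, hν, h3, h4⟩ := prodDecomp H h2
  obtain ⟨ha, h3'⟩ := iterDBound H h3
  obtain ⟨hb, h4'⟩ := iterDBound H h4
  have e1 : df - i ≤ (μ : ℤ) := by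
    by_contra hc; exact h1 (hf i μ (by omega))
  have e2 : dg - j ≤ ((ν₁ - a : ℕ) : ℤ) := by
    by_contra hc; exact h3' (hg j (ν₁ - a) (by omega))
  have e3 : dh - k ≤ ((ν₂ - b : ℕ) : ℤ) := by
    by_contra hc; exact h4' (hh k (ν₂ - b) (by omega))
  exact ⟨μ, ν₁, ν₂, by omega, e1, by exact_mod_cast ha, by push_cast [Nat.cast_sub ha] at e2 ⊢; omega,
    by exact_mod_cast hb, by push_cast [Nat.cast_sub hb] at e3 ⊢; omega⟩

/-- Pair version. -/
lemma pairBound (H : Gd gr D) {f g : ℤ → R} {df dg : ℤ}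
    (hf : TwoBKPPlus.HomBound gr f df) (hg : TwoBKPPlus.HomBound gr g dg)
    {i j : ℤ} {a m : ℕ}
    (hne : gr m (f i * (⇑D)^[a] (g j)) ≠ 0) :
    ∃ μ ν : ℕ, μ + ν = m ∧ df - i ≤ (μ : ℤ) ∧ (a : ℤ) ≤ ν ∧ dg - j ≤ (ν : ℤ) - a := by
  obtain ⟨μ, ν, hμν, h1, h2⟩ := prodDecomp H hne
  obtain ⟨ha, h2'⟩ := iterDBound H h2
  have e1 : df - i ≤ (μ : ℤ) := by
    by_contra hc; exact h1 (hf i μ (by omega))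
  have e2 : dg - j ≤ ((ν - a : ℕ) : ℤ) := by
    by_contra hc; exact h2' (hg j (ν - a) (by omega))
  exact ⟨μ, ν, hμν, e1, by exact_mod_cast ha, by push_cast [Nat.cast_sub ha] at e2 ⊢; omega⟩

open TwoBKPPlus

variable {f g : ℤ → R} {df dg : ℤ}

lemma prodTerm_ne (H : Gd gr D) (hf : HomBound gr f df) (hg : HomBound gr g dg)
    {n : ℤ} {m : ℕ} {p : ℤ × ℤ} (h : prodTerm gr ⇑D f g n m p ≠ 0) :
    0 ≤ p.1 + p.2 - n ∧ df - m ≤ p.1 ∧ p.1 ≤ n + 2 * m - dg ∧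
      dg - m ≤ p.2 ∧ p.2 ≤ n + 2 * m - df ∧ df + dg - n ≤ (m : ℤ) := by
  rw [prodTerm] at h
  by_cases hc : 0 ≤ p.1 + p.2 - n
  · rw [if_pos hc, map_zsmul] at h
    have h2 : gr m (f p.1 * (⇑D)^[(p.1 + p.2 - n).toNat] (g p.2)) ≠ 0 :=
      fun h0 => h (by rw [h0, smul_zero])
    obtain ⟨μ, ν, hμν, e1, e2, e3⟩ := pairBound H hf hg h2
    have ht : ((p.1 + p.2 - n).toNat : ℤ) = p.1 + p.2 - n := Int.toNat_of_nonneg hc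
    rw [ht] at e2 e3
    refine ⟨hc, by omega, by omega, by omega, by omega, by omega⟩
  · exact absurd (if_neg hc) h

lemma prodTerm_support (H : Gd gr D) (hf : HomBound gr f df) (hg : HomBound gr g dg)
    (n : ℤ) (m : ℕ) :
    Function.support (prodTerm gr ⇑D f g n m) ⊆
      ↑(Finset.Icc (df - m) (n + 2 * m - dg) ×ˢ Finset.Icc (dg - m) (n + 2 * m - df)) := by
  intro p hp
  obtain ⟨-, e1, e2, e3, e4, -⟩ := prodTerm_ne H hf hg hp
  simp only [Finset.coe_product, Set.mem_prod, Finset.mem_coe, Finset.mem_Icc]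
  exact ⟨⟨e1, e2⟩, ⟨e3, e4⟩⟩

lemma prodTerm_finite (H : Gd gr D) (hf : HomBound gr f df) (hg : HomBound gr g dg)
    (n : ℤ) (m : ℕ) : (Function.support (prodTerm gr ⇑D f g n m)).Finite :=
  Set.Finite.subset (Finset.finite_toSet _) (prodTerm_support H hf hg n m)

lemma prodCoeff_eq_sum (s : Finset (ℤ × ℤ)) {n : ℤ} {m : ℕ}
    (hs : Function.support (prodTerm gr ⇑D f g n m) ⊆ ↑s) :
    prodCoeff gr ⇑D f g n m = ∑ p ∈ s, prodTerm gr ⇑D f g n m p :=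
  finsum_eq_sum_of_support_subset _ hs

lemma gr_prodTerm (H : Gd gr D) (ν : ℕ) {n : ℤ} {m : ℕ} (p : ℤ × ℤ) :
    gr ν (prodTerm gr ⇑D f g n m p)
      = if ν = m then prodTerm gr ⇑D f g n m p else 0 := by
  rw [prodTerm]
  by_cases hc : 0 ≤ p.1 + p.2 - n
  · rw [if_pos hc]
    by_cases hν : ν = m
    · subst hν; rw [if_pos rfl, H.hidem]
    · rw [if_neg hν, H.horth ν m _ hν]
  · rw [if_neg hc, map_zero]
    simp

lemma gr_prodCoeff (H : Gd gr D) (hf : HomBound gr f df) (hg : HomBound gr g dg)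
    (ν : ℕ) (n : ℤ) (m : ℕ) :
    gr ν (prodCoeff gr ⇑D f g n m)
      = if ν = m then prodCoeff gr ⇑D f g n m else 0 := by
  have hrw : gr ν (prodCoeff gr ⇑D f g n m)
      = ∑ᶠ p, gr ν (prodTerm gr ⇑D f g n m p) :=
    (gr ν).map_finsum (prodTerm_finite H hf hg n m)
  rw [hrw]
  by_cases hν : ν = m
  · subst hν
    rw [if_pos rfl]
    exact finsum_congr fun p => by rw [gr_prodTerm H, if_pos rfl]
  · rw [if_neg hν]
    exact finsum_eq_zero_of_forall_eq_zero fun p => by rw [gr_prodTerm H, if_neg hν]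

lemma pmulP_exists (H : Gd gr D) (hf : HomBound gr f df) (hg : HomBound gr g dg)
    (n : ℤ) : ∃ a : R, ∀ m : ℕ, gr m a = prodCoeff gr ⇑D f g n m :=
  H.hcomplete _ fun m => by rw [gr_prodCoeff H hf hg, if_pos rfl]

lemma pmulP_spec (H : Gd gr D) (hf : HomBound gr f df) (hg : HomBound gr g dg)
    (n : ℤ) (m : ℕ) :
    gr m (pmulP gr ⇑D f g n) = prodCoeff gr ⇑D f g n m := by
  rw [pmulP, dif_pos (pmulP_exists H hf hg n)]
  exact (pmulP_exists H hf hg n).choose_spec m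

lemma homBound_pmulP (H : Gd gr D) (hf : HomBound gr f df) (hg : HomBound gr g dg) :
    HomBound gr (pmulP gr ⇑D f g) (df + dg) := by
  intro n m hm
  rw [pmulP_spec H hf hg]
  exact finsum_eq_zero_of_forall_eq_zero fun p => by
    by_contra hp
    have := (prodTerm_ne H hf hg hp).2.2.2.2.2
    omega

lemma iterD_one {r : ℕ} (hr : 1 ≤ r) : (⇑D)^[r] (1 : R) = 0 := by
  obtain ⟨r', rfl⟩ : ∃ r', r = r' + 1 := ⟨r - 1, by omega⟩
  rw [Function.iterate_succ_apply, Derivation.map_one_eq_zero, iterD_zero]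

lemma ponep_bound : HomBound gr (ponep : ℤ → R) 0 := by
  intro i m hm
  by_cases hi : i = 0
  · subst hi; omega
  · rw [ponep, if_neg hi, map_zero]

lemma punit_left (H : Gd gr D) (hf : HomBound gr f df) (n : ℤ) :
    pmulP gr ⇑D ponep f n = f n := by
  refine H.hsep _ _ fun m => ?_
  rw [pmulP_spec H ponep_bound hf n m]
  have hs : prodCoeff gr ⇑D ponep f n m = prodTerm gr ⇑D ponep f n m (0, n) := by
    refine finsum_eq_single _ (0, n) fun p hp => ?_
    rw [prodTerm]
    by_cases hc : 0 ≤ p.1 + p.2 - n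
    · rw [if_pos hc]
      by_cases h1 : p.1 = 0
      · have h2 : p.2 ≠ n := fun h => hp (by rw [Prod.ext_iff, h1, h]; exact ⟨rfl, rfl⟩)
        have h3 : 1 ≤ (p.1 + p.2 - n).toNat := by omega
        obtain ⟨r', hr'⟩ : ∃ r', (p.1 + p.2 - n).toNat = r' + 1 :=
          ⟨(p.1 + p.2 - n).toNat - 1, by omega⟩
        have h4 : zchoose p.1 (p.1 + p.2 - n).toNat = 0 := by
          rw [hr', h1, zchoose, Ring.choose_zero_succ]
        rw [h4, zero_smul, map_zero]
      · rw [ponep, if_neg h1, zero_mul, smul_zero, map_zero]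
    · rw [if_neg hc]
  rw [hs, prodTerm]
  simp [zchoose, ponep, Ring.choose_zero_right]

lemma punit_right (H : Gd gr D) (hf : HomBound gr f df) (n : ℤ) :
    pmulP gr ⇑D f ponep n = f n := by
  refine H.hsep _ _ fun m => ?_
  rw [pmulP_spec H hf ponep_bound n m]
  have hs : prodCoeff gr ⇑D f ponep n m = prodTerm gr ⇑D f ponep n m (n, 0) := by
    refine finsum_eq_single _ (n, 0) fun p hp => ?_
    rw [prodTerm]
    by_cases hc : 0 ≤ p.1 + p.2 - n
    · rw [if_pos hc]
      by_cases h2 : p.2 = 0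
      · have h1 : p.1 ≠ n := fun h => hp (by rw [Prod.ext_iff, h2, h]; exact ⟨rfl, rfl⟩)
        have h3 : 1 ≤ (p.1 + p.2 - n).toNat := by omega
        have h4 : (ponep p.2 : R) = 1 := by simp [ponep, h2]
        rw [h4, iterD_one h3, mul_zero, smul_zero, map_zero]
      · rw [ponep, if_neg h2, iterD_zero, mul_zero, smul_zero, map_zero]
    · rw [if_neg hc]
  rw [hs, prodTerm]
  simp [zchoose, ponep, Ring.choose_zero_right]

lemma homBound_add {h : ℤ → R} {dh : ℤ} (hg : HomBound gr g dg) (hh : HomBound gr h dh) :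
    HomBound gr (g + h) (min dg dh) := by
  intro i m hm
  rw [Pi.add_apply, map_add, hg i m (by omega), hh i m (by omega), add_zero]

lemma prodTerm_add_right {h : ℤ → R} (n : ℤ) (m : ℕ) (p : ℤ × ℤ) :
    prodTerm gr ⇑D f (g + h) n m p
      = prodTerm gr ⇑D f g n m p + prodTerm gr ⇑D f h n m p := by
  rw [prodTerm, prodTerm, prodTerm]
  by_cases hc : 0 ≤ p.1 + p.2 - n
  · rw [if_pos hc, if_pos hc, if_pos hc, Pi.add_apply, iterD_add, mul_add, smul_add,
      map_add]
  · rw [if_neg hc, if_neg hc, if_neg hc, add_zero]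

lemma prodTerm_add_left {h : ℤ → R} (n : ℤ) (m : ℕ) (p : ℤ × ℤ) :
    prodTerm gr ⇑D (f + g) h n m p
      = prodTerm gr ⇑D f h n m p + prodTerm gr ⇑D g h n m p := by
  rw [prodTerm, prodTerm, prodTerm]
  by_cases hc : 0 ≤ p.1 + p.2 - n
  · rw [if_pos hc, if_pos hc, if_pos hc, Pi.add_apply, add_mul, smul_add, map_add]
  · rw [if_neg hc, if_neg hc, if_neg hc, add_zero]

/-- The key combinatorial identity. -/
lemma comb (i j : ℤ) (r s : ℕ) :
    ∑ s' ∈ range (s + 1),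
        zchoose i (r + (s - s')) * zchoose j s' * ((r + (s - s')).choose r : ℤ)
      = zchoose i r * zchoose (i + j - r) s := by
  have h1 : ∀ b : ℕ, zchoose i (r + b) * ((r + b).choose r : ℤ)
      = zchoose i r * zchoose (i - r) b := by
    intro b
    have h := Ring.choose_smul_choose (i : ℤ) (n := r + b) (k := r) (Nat.le_add_right r b)
    rw [nsmul_eq_mul, Nat.add_sub_cancel_left] at h
    rw [zchoose, zchoose, zchoose, mul_comm, h]
  have hV := Ring.add_choose_eq (r := (j : ℤ)) (s := i - r) s (Commute.all _ _)
  rw [Finset.Nat.sum_antidiagonal_eq_sum_range_succ_mk] at hV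
  calc ∑ s' ∈ range (s + 1),
        zchoose i (r + (s - s')) * zchoose j s' * ((r + (s - s')).choose r : ℤ)
      = ∑ s' ∈ range (s + 1), zchoose i r * (zchoose j s' * zchoose (i - r) (s - s')) := by
        refine sum_congr rfl fun s' _ => ?_
        rw [mul_right_comm, h1 (s - s')]
        ring
    _ = zchoose i r * ∑ s' ∈ range (s + 1), zchoose j s' * zchoose (i - r) (s - s') := by
        rw [mul_sum]
    _ = zchoose i r * zchoose (i + j - r) s := by
        congr 1
        have he : i + j - (r : ℤ) = j + (i - r) := by ring
        rw [zchoose, he, hV]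
        exact sum_congr rfl fun s' _ => rfl

section Assoc

variable (gr : ℕ → R →+ R) (D : Derivation ℤ R R) (f g h : ℤ → R) (n : ℤ) (m : ℕ)

/-- Fully expanded term of the left-associated product. -/
noncomputable def EL (p k i j : ℤ) : R :=
  if 0 ≤ p + k - n ∧ 0 ≤ i + j - p then
    (zchoose p (p + k - n).toNat * zchoose i (i + j - p).toNat) •
      gr m (f i * ((⇑D)^[(i + j - p).toNat] (g j) * (⇑D)^[(p + k - n).toNat] (h k)))
  else 0

/-- Fully expanded term of the right-associated product. -/
noncomputable def ER (i q j k : ℤ) : R :=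
  if 0 ≤ i + q - n ∧ 0 ≤ j + k - q then
    ∑ c ∈ range ((i + q - n).toNat + 1),
      (zchoose i (i + q - n).toNat * zchoose j (j + k - q).toNat *
          ((i + q - n).toNat.choose c : ℤ)) •
        gr m (f i *
          ((⇑D)^[c] (g j) * (⇑D)^[(i + q - n).toNat - c + (j + k - q).toNat] (h k)))
  else 0

/-- Canonical triple sum, left-associated form. -/
noncomputable def WL (i j k : ℤ) : R :=
  if 0 ≤ i + j + k - n then
    ∑ r ∈ range ((i + j + k - n).toNat + 1),
      (zchoose (i + j - r) ((i + j + k - n).toNat - r) * zchoose i r) •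
        gr m (f i * ((⇑D)^[r] (g j) * (⇑D)^[(i + j + k - n).toNat - r] (h k)))
  else 0

/-- Canonical triple sum, right-associated form. -/
noncomputable def WR (i j k : ℤ) : R :=
  if 0 ≤ i + j + k - n then
    ∑ s' ∈ range ((i + j + k - n).toNat + 1),
      ∑ c ∈ range (((i + j + k - n).toNat - s') + 1),
        (zchoose i ((i + j + k - n).toNat - s') * zchoose j s' *
            (((i + j + k - n).toNat - s').choose c : ℤ)) •
          gr m (f i * ((⇑D)^[c] (g j) * (⇑D)^[(i + j + k - n).toNat - c] (h k)))
  else 0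

lemma triangle_swap {M : Type*} [AddCommMonoid M] (t : ℕ) (F : ℕ → ℕ → M) :
    ∑ a ∈ range (t + 1), ∑ b ∈ range ((t - a) + 1), F a b
      = ∑ b ∈ range (t + 1), ∑ a ∈ range ((t - b) + 1), F a b := by
  have key : ∀ (G : ℕ → ℕ → M) (a : ℕ), a ≤ t →
      ∑ b ∈ range ((t - a) + 1), G a b
        = ∑ b ∈ range (t + 1), if a + b ≤ t then G a b else 0 := by
    intro G a ha
    have h1 : ∑ b ∈ range ((t - a) + 1), G a b
        = ∑ b ∈ range ((t - a) + 1), if a + b ≤ t then G a b else 0 :=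
      sum_congr rfl fun b hb => (if_pos (by have := mem_range.1 hb; omega)).symm
    rw [h1]
    exact Finset.sum_subset (Finset.range_subset_range.2 (by omega))
      (fun b hb hb' => if_neg (by simp only [mem_range] at hb hb'; omega))
  calc ∑ a ∈ range (t + 1), ∑ b ∈ range ((t - a) + 1), F a b
      = ∑ a ∈ range (t + 1), ∑ b ∈ range (t + 1), if a + b ≤ t then F a b else 0 :=
        sum_congr rfl fun a ha => key F a (by have := mem_range.1 ha; omega)
    _ = ∑ b ∈ range (t + 1), ∑ a ∈ range (t + 1), if a + b ≤ t then F a b else 0 :=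
        Finset.sum_comm
    _ = ∑ b ∈ range (t + 1), ∑ a ∈ range ((t - b) + 1), F a b := by
        refine sum_congr rfl fun b hb => ?_
        rw [key (fun b a => F a b) b (by have := mem_range.1 hb; omega)]
        exact (sum_congr rfl fun a ha => if_congr (by omega) rfl rfl).symm

lemma WL_eq_WR (i j k : ℤ) : WL gr D f g h n m i j k = WR gr D f g h n m i j k := by
  rw [WL, WR]
  by_cases hT : 0 ≤ i + j + k - n
  · rw [if_pos hT, if_pos hT]
    set t := (i + j + k - n).toNat with ht
    have keycoeff : ∀ c, c ∈ range (t + 1) →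
        ∑ s' ∈ range ((t - c) + 1),
            zchoose i (t - s') * zchoose j s' * ((t - s').choose c : ℤ)
          = zchoose (i + j - c) (t - c) * zchoose i c := by
      intro c hc
      have hc' : c ≤ t := by have := mem_range.1 hc; omega
      have hcomb := comb i j c (t - c)
      rw [mul_comm (zchoose (i + j - (c : ℤ)) (t - c)), ← hcomb]
      refine (sum_congr rfl fun s' hs' => ?_)
      have hs'' : s' ≤ t - c := by have := mem_range.1 hs'; omega
      have he : c + ((t - c) - s') = t - s' := by omega
      rw [he]
    refine Eq.symm ?_
    calc ∑ s' ∈ range (t + 1), ∑ c ∈ range ((t - s') + 1),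
            (zchoose i (t - s') * zchoose j s' * ((t - s').choose c : ℤ)) •
              gr m (f i * ((⇑D)^[c] (g j) * (⇑D)^[t - c] (h k)))
        = ∑ c ∈ range (t + 1), ∑ s' ∈ range ((t - c) + 1),
            (zchoose i (t - s') * zchoose j s' * ((t - s').choose c : ℤ)) •
              gr m (f i * ((⇑D)^[c] (g j) * (⇑D)^[t - c] (h k))) :=
          triangle_swap t _
      _ = ∑ c ∈ range (t + 1),
            (zchoose (i + j - c) (t - c) * zchoose i c) •
              gr m (f i * ((⇑D)^[c] (g j) * (⇑D)^[t - c] (h k))) := by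
          refine sum_congr rfl fun c hc => ?_
          rw [← Finset.sum_smul, keycoeff c hc]
  · rw [if_neg hT, if_neg hT]

variable {gr D f g h}

lemma claimL (H : Gd gr D) {df dg dh : ℤ} (hf : HomBound gr f df)
    (hg : HomBound gr g dg) (hh : HomBound gr h dh) (i j k : ℤ) :
    ∑ p ∈ Finset.Icc (df + dg - 3 * (m : ℤ)) (n + 2 * m - dh),
        EL gr D f g h n m p k i j
      = WL gr D f g h n m i j k := by
  have ELne : ∀ p : ℤ, EL gr D f g h n m p k i j ≠ 0 →
      p ∈ Finset.Icc (df + dg - 3 * (m : ℤ)) (n + 2 * m - dh) := by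
    intro p hp
    rw [EL] at hp
    by_cases hc : 0 ≤ p + k - n ∧ 0 ≤ i + j - p
    · rw [if_pos hc] at hp
      have h2 : gr m (f i * ((⇑D)^[(i + j - p).toNat] (g j) *
          (⇑D)^[(p + k - n).toNat] (h k))) ≠ 0 :=
        fun h0 => hp (by rw [h0, smul_zero])
      obtain ⟨μ, ν₁, ν₂, hsum, e1, e2, e3, e4, e5⟩ := tripleBound H hf hg hh h2
      simp only [Finset.mem_Icc]
      omega
    · exact absurd (if_neg hc) hp
  by_cases hT : 0 ≤ i + j + k - n
  · set t := (i + j + k - n).toNat with htdef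
    have htT : (t : ℤ) = i + j + k - n := Int.toNat_of_nonneg hT
    set I : Finset ℤ := (range (t + 1)).image (fun r : ℕ => i + j - r) with hI
    have hvan : ∀ p : ℤ, p ∉ I → EL gr D f g h n m p k i j = 0 := by
      intro p hpI
      rw [EL]
      by_cases hc : 0 ≤ p + k - n ∧ 0 ≤ i + j - p
      · exfalso
        refine hpI ?_
        simp only [hI, Finset.mem_image, mem_range]
        exact ⟨(i + j - p).toNat, by omega, by omega⟩
      · exact if_neg hc
    have h1 := Finset.sum_subset
      (Finset.subset_union_left
        (s₁ := Finset.Icc (df + dg - 3 * (m : ℤ)) (n + 2 * m - dh)) (s₂ := I))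
      (f := fun p => EL gr D f g h n m p k i j)
      (fun p _ hp => by by_contra h0; exact hp (ELne p h0))
    have h2 := Finset.sum_subset
      (Finset.subset_union_right
        (s₁ := Finset.Icc (df + dg - 3 * (m : ℤ)) (n + 2 * m - dh)) (s₂ := I))
      (f := fun p => EL gr D f g h n m p k i j)
      (fun p _ hp => hvan p hp)
    rw [h1, ← h2, hI]
    rw [Finset.sum_image (fun r hr r' hr' e => by omega)]
    rw [WL, if_pos hT]
    refine sum_congr rfl fun r hr => ?_
    have hrt : r ≤ t := by have := mem_range.1 hr; omega
    have hc : 0 ≤ (i + j - (r : ℤ)) + k - n ∧ 0 ≤ i + j - (i + j - (r : ℤ)) := by omega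
    rw [EL, if_pos hc]
    have e1 : (i + j - (i + j - (r : ℤ))).toNat = r := by omega
    have e2 : ((i + j - (r : ℤ)) + k - n).toNat = t - r := by omega
    rw [e1, e2]
  · rw [WL, if_neg hT]
    refine Finset.sum_eq_zero fun p _ => ?_
    rw [EL]
    refine if_neg fun hc => hT (by omega)

lemma claimR (H : Gd gr D) {df dg dh : ℤ} (hf : HomBound gr f df)
    (hg : HomBound gr g dg) (hh : HomBound gr h dh) (i j k : ℤ) :
    ∑ q ∈ Finset.Icc (dg + dh - 3 * (m : ℤ)) (n + 2 * m - df),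
        ER gr D f g h n m i q j k
      = WR gr D f g h n m i j k := by
  have ERne : ∀ q : ℤ, ER gr D f g h n m i q j k ≠ 0 →
      q ∈ Finset.Icc (dg + dh - 3 * (m : ℤ)) (n + 2 * m - df) := by
    intro q hq
    rw [ER] at hq
    by_cases hc : 0 ≤ i + q - n ∧ 0 ≤ j + k - q
    · rw [if_pos hc] at hq
      obtain ⟨c, hcmem, hcne⟩ := Finset.exists_ne_zero_of_sum_ne_zero hq
      have hct : c ≤ (i + q - n).toNat := by have := mem_range.1 hcmem; omega
      have h2 : gr m (f i * ((⇑D)^[c] (g j) *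
          (⇑D)^[(i + q - n).toNat - c + (j + k - q).toNat] (h k))) ≠ 0 :=
        fun h0 => hcne (by rw [h0, smul_zero])
      obtain ⟨μ, ν₁, ν₂, hsum, e1, e2, e3, e4, e5⟩ := tripleBound H hf hg hh h2
      simp only [Finset.mem_Icc]
      omega
    · exact absurd (if_neg hc) hq
  by_cases hT : 0 ≤ i + j + k - n
  · set t := (i + j + k - n).toNat with htdef
    have htT : (t : ℤ) = i + j + k - n := Int.toNat_of_nonneg hT
    set I : Finset ℤ := (range (t + 1)).image (fun s' : ℕ => j + k - s') with hI
    have hvan : ∀ q : ℤ, q ∉ I → ER gr D f g h n m i q j k = 0 := by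
      intro q hqI
      rw [ER]
      by_cases hc : 0 ≤ i + q - n ∧ 0 ≤ j + k - q
      · exfalso
        refine hqI ?_
        simp only [hI, Finset.mem_image, mem_range]
        exact ⟨(j + k - q).toNat, by omega, by omega⟩
      · exact if_neg hc
    have h1 := Finset.sum_subset
      (Finset.subset_union_left
        (s₁ := Finset.Icc (dg + dh - 3 * (m : ℤ)) (n + 2 * m - df)) (s₂ := I))
      (f := fun q => ER gr D f g h n m i q j k)
      (fun q _ hq => by by_contra h0; exact hq (ERne q h0))
    have h2 := Finset.sum_subset
      (Finset.subset_union_right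
        (s₁ := Finset.Icc (dg + dh - 3 * (m : ℤ)) (n + 2 * m - df)) (s₂ := I))
      (f := fun q => ER gr D f g h n m i q j k)
      (fun q _ hq => hvan q hq)
    rw [h1, ← h2, hI]
    rw [Finset.sum_image (fun a ha a' ha' e => by omega)]
    rw [WR, if_pos hT]
    refine sum_congr rfl fun s' hs' => ?_
    have hst : s' ≤ t := by have := mem_range.1 hs'; omega
    have hc : 0 ≤ i + (j + k - (s' : ℤ)) - n ∧ 0 ≤ j + k - (j + k - (s' : ℤ)) := by omega
    rw [ER, if_pos hc]
    have e1 : (i + (j + k - (s' : ℤ)) - n).toNat = t - s' := by omega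
    have e2 : (j + k - (j + k - (s' : ℤ))).toNat = s' := by omega
    rw [e1, e2]
    refine sum_congr rfl fun c hcm => ?_
    have hc' : c ≤ t - s' := by have := mem_range.1 hcm; omega
    have e3 : (t - s') - c + s' = t - c := by omega
    rw [e3]
  · rw [WR, if_neg hT]
    refine Finset.sum_eq_zero fun q _ => ?_
    rw [ER]
    refine if_neg fun hc => hT (by omega)

lemma trunc (H : Gd gr D) {a b : R} (x : R)
    (hab : ∀ ν : ℕ, ν ≤ m → gr ν a = gr ν b) :
    gr m (x * a) = gr m (x * b) := by
  rw [H.hmul, H.hmul]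
  exact sum_congr rfl fun μ hμ => by rw [hab (m - μ) (by omega)]

lemma expandL (H : Gd gr D) {df dg dh : ℤ} (hf : HomBound gr f df)
    (hg : HomBound gr g dg) (hh : HomBound gr h dh) (p k : ℤ)
    (hp : p ≤ n + 2 * m - dh) :
    prodTerm gr ⇑D (pmulP gr ⇑D f g) h n m (p, k)
      = ∑ x ∈ Finset.Icc (df - (m : ℤ)) (n + 4 * m - dg - dh) ×ˢ
          Finset.Icc (dg - (m : ℤ)) (n + 4 * m - df - dh),
          EL gr D f g h n m p k x.1 x.2 := by
  simp only [prodTerm]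
  by_cases hc : 0 ≤ p + k - n
  case neg =>
    rw [if_neg hc]
    exact (Finset.sum_eq_zero fun x _ => by
      rw [EL]; exact if_neg (fun hx => hc hx.1)).symm
  case pos =>
    rw [if_pos hc, map_zsmul]
    have hF : ∀ μ : ℕ, μ ∈ range (m + 1) →
        gr μ (pmulP gr ⇑D f g p)
          = ∑ x ∈ Finset.Icc (df - (m : ℤ)) (n + 4 * m - dg - dh) ×ˢ
              Finset.Icc (dg - (m : ℤ)) (n + 4 * m - df - dh),
              prodTerm gr ⇑D f g p μ x := by
      intro μ hμ
      have hμm : μ ≤ m := by have := mem_range.1 hμ; omega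
      rw [pmulP_spec H hf hg]
      refine prodCoeff_eq_sum _ ?_
      intro x hx
      obtain ⟨-, e1, e2, e3, e4, -⟩ := prodTerm_ne H hf hg hx
      rw [Finset.mem_coe, Finset.mem_product, Finset.mem_Icc, Finset.mem_Icc]
      omega
    rw [H.hmul]
    have hexp : ∑ μ ∈ range (m + 1),
        gr μ (pmulP gr ⇑D f g p) * gr (m - μ) ((⇑D)^[(p + k - n).toNat] (h k))
          = ∑ μ ∈ range (m + 1),
              ∑ x ∈ Finset.Icc (df - (m : ℤ)) (n + 4 * m - dg - dh) ×ˢ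
                Finset.Icc (dg - (m : ℤ)) (n + 4 * m - df - dh),
                prodTerm gr ⇑D f g p μ x * gr (m - μ) ((⇑D)^[(p + k - n).toNat] (h k)) :=
      sum_congr rfl fun μ hμ => by rw [hF μ hμ, Finset.sum_mul]
    rw [hexp, Finset.sum_comm, Finset.smul_sum]
    refine sum_congr rfl fun x hx => ?_
    rw [EL]
    by_cases hij : 0 ≤ x.1 + x.2 - p
    · rw [if_pos ⟨hc, hij⟩]
      have hterm : ∀ μ ∈ range (m + 1),
          prodTerm gr ⇑D f g p μ x * gr (m - μ) ((⇑D)^[(p + k - n).toNat] (h k))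
            = zchoose x.1 (x.1 + x.2 - p).toNat •
                (gr μ (f x.1 * (⇑D)^[(x.1 + x.2 - p).toNat] (g x.2)) *
                  gr (m - μ) ((⇑D)^[(p + k - n).toNat] (h k))) := by
        intro μ _
        rw [prodTerm, if_pos hij, map_zsmul, smul_mul_assoc]
      rw [sum_congr rfl hterm, ← Finset.smul_sum, ← H.hmul, smul_smul, mul_assoc]
    · rw [if_neg (fun hx2 => hij hx2.2)]
      have hterm : ∀ μ ∈ range (m + 1),
          prodTerm gr ⇑D f g p μ x * gr (m - μ) ((⇑D)^[(p + k - n).toNat] (h k)) = 0 := by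
        intro μ _
        rw [prodTerm, if_neg hij, zero_mul]
      rw [sum_congr rfl hterm, Finset.sum_const_zero, smul_zero]

lemma expandR (H : Gd gr D) {df dg dh : ℤ} (hf : HomBound gr f df)
    (hg : HomBound gr g dg) (hh : HomBound gr h dh) (i q : ℤ)
    (hq : q ≤ n + 2 * m - df) :
    prodTerm gr ⇑D f (pmulP gr ⇑D g h) n m (i, q)
      = ∑ x ∈ Finset.Icc (dg - (m : ℤ)) (n + 4 * m - df - dh) ×ˢ
          Finset.Icc (dh - (m : ℤ)) (n + 4 * m - df - dg),
          ER gr D f g h n m i q x.1 x.2 := by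
  simp only [prodTerm]
  by_cases hc : 0 ≤ i + q - n
  case neg =>
    rw [if_neg hc]
    exact (Finset.sum_eq_zero fun x _ => by
      rw [ER]; exact if_neg (fun hx => hc hx.1)).symm
  case pos =>
    rw [if_pos hc, map_zsmul]
    set C2 := Finset.Icc (dg - (m : ℤ)) (n + 4 * m - df - dh) ×ˢ
      Finset.Icc (dh - (m : ℤ)) (n + 4 * m - df - dg) with hC2
    set t := (i + q - n).toNat with htdef
    have hbox : ∀ σ : ℕ, σ ≤ m →
        prodCoeff gr ⇑D g h q σ = ∑ x ∈ C2, prodTerm gr ⇑D g h q σ x := by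
      intro σ hσ
      refine prodCoeff_eq_sum _ ?_
      intro x hx
      obtain ⟨-, e1, e2, e3, e4, -⟩ := prodTerm_ne H hg hh hx
      rw [hC2, Finset.mem_coe, Finset.mem_product, Finset.mem_Icc, Finset.mem_Icc]
      omega
    have hsame : ∀ ν : ℕ, ν ≤ m →
        gr ν ((⇑D)^[t] (pmulP gr ⇑D g h q))
          = gr ν ((⇑D)^[t]
              (∑ x ∈ C2, ∑ ν' ∈ range (m + 1), prodTerm gr ⇑D g h q ν' x)) := by
      intro ν hν
      have hgr : gr (ν - t) (pmulP gr ⇑D g h q)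
          = gr (ν - t) (∑ x ∈ C2, ∑ ν' ∈ range (m + 1), prodTerm gr ⇑D g h q ν' x) := by
        rw [pmulP_spec H hg hh q (ν - t), map_sum]
        have hx : ∀ x ∈ C2,
            gr (ν - t) (∑ ν' ∈ range (m + 1), prodTerm gr ⇑D g h q ν' x)
              = prodTerm gr ⇑D g h q (ν - t) x := by
          intro x _
          rw [map_sum, sum_congr rfl fun ν' _ => gr_prodTerm H (ν - t) x,
            Finset.sum_ite_eq]
          exact if_pos (mem_range.2 (by omega))
        rw [sum_congr rfl hx, ← hbox (ν - t) (by omega)]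
      rw [grD H, grD H, hgr]
    rw [trunc m H (f i) hsame, iterD_sum, mul_sum, map_sum, Finset.smul_sum]
    refine sum_congr rfl fun x hx => ?_
    by_cases hjk : 0 ≤ x.1 + x.2 - q
    · have hsame2 : ∀ σ : ℕ, σ ≤ m →
          gr σ ((⇑D)^[t] (∑ ν' ∈ range (m + 1), prodTerm gr ⇑D g h q ν' x))
            = gr σ ((⇑D)^[t] (zchoose x.1 (x.1 + x.2 - q).toNat •
                (g x.1 * (⇑D)^[(x.1 + x.2 - q).toNat] (h x.2)))) := by
        intro σ hσ
        have hgr2 : gr (σ - t) (∑ ν' ∈ range (m + 1), prodTerm gr ⇑D g h q ν' x)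
            = gr (σ - t) (zchoose x.1 (x.1 + x.2 - q).toNat •
                (g x.1 * (⇑D)^[(x.1 + x.2 - q).toNat] (h x.2))) := by
          rw [map_sum, sum_congr rfl fun ν' _ => gr_prodTerm H (σ - t) x,
            Finset.sum_ite_eq, if_pos (mem_range.2 (by omega)), prodTerm, if_pos hjk]
        rw [grD H, grD H, hgr2]
      have hLeib : gr m (f i * (⇑D)^[t] (g x.1 * (⇑D)^[(x.1 + x.2 - q).toNat] (h x.2)))
          = ∑ c ∈ range (t + 1), ((t.choose c : ℤ)) •
              gr m (f i * ((⇑D)^[c] (g x.1) *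
                (⇑D)^[t - c + (x.1 + x.2 - q).toNat] (h x.2))) := by
        rw [iterLeibniz, mul_sum, map_sum]
        refine sum_congr rfl fun c hcm => ?_
        rw [mul_smul_comm, map_zsmul, ← Function.iterate_add_apply]
      rw [trunc m H (f i) hsame2, iterD_zsmul, mul_smul_comm, map_zsmul, hLeib,
        Finset.smul_sum, Finset.smul_sum, ER, if_pos ⟨hc, hjk⟩]
      refine sum_congr rfl fun c hcm => ?_
      rw [smul_smul, smul_smul]
    · rw [ER, if_neg (fun hx2 => hjk hx2.2)]
      have hz : ∀ ν' ∈ range (m + 1), prodTerm gr ⇑D g h q ν' x = 0 := by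
        intro ν' _
        rw [prodTerm]
        exact if_neg hjk
      rw [sum_congr rfl hz, Finset.sum_const_zero, iterD_zero, mul_zero, map_zero,
        smul_zero]

lemma WL_ne (H : Gd gr D) {df dg dh : ℤ} (hf : HomBound gr f df)
    (hg : HomBound gr g dg) (hh : HomBound gr h dh) (i j k : ℤ)
    (hW : WL gr D f g h n m i j k ≠ 0) :
    df - m ≤ i ∧ i ≤ n + m - dg - dh ∧ dg - m ≤ j ∧ j ≤ n + m - df - dh ∧
      dh - m ≤ k ∧ k ≤ n + m - df - dg := by
  rw [WL] at hW
  by_cases hT : 0 ≤ i + j + k - n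
  · rw [if_pos hT] at hW
    obtain ⟨r, hr, hne⟩ := Finset.exists_ne_zero_of_sum_ne_zero hW
    have hrt : r ≤ (i + j + k - n).toNat := by have := mem_range.1 hr; omega
    have h2 : gr m (f i * ((⇑D)^[r] (g j) *
        (⇑D)^[(i + j + k - n).toNat - r] (h k))) ≠ 0 :=
      fun h0 => hne (by rw [h0, smul_zero])
    obtain ⟨μ, ν₁, ν₂, hsum, e1, e2, e3, e4, e5⟩ := tripleBound H hf hg hh h2
    omega
  · exact absurd (if_neg hT) hW

lemma assoc_coeff (H : Gd gr D) {df dg dh : ℤ} (hf : HomBound gr f df)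
    (hg : HomBound gr g dg) (hh : HomBound gr h dh) :
    prodCoeff gr ⇑D (pmulP gr ⇑D f g) h n m
      = prodCoeff gr ⇑D f (pmulP gr ⇑D g h) n m := by
  have hFb := homBound_pmulP H hf hg
  have hGb := homBound_pmulP H hg hh
  have stepL1 : prodCoeff gr ⇑D (pmulP gr ⇑D f g) h n m
      = ∑ y ∈ Finset.Icc (df + dg - 3 * (m : ℤ)) (n + 2 * m - dh) ×ˢ
          Finset.Icc (dh - (m : ℤ)) (n + 4 * m - df - dg),
          prodTerm gr ⇑D (pmulP gr ⇑D f g) h n m y := by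
    refine prodCoeff_eq_sum _ ?_
    intro y hy
    obtain ⟨-, e1, e2, e3, e4, -⟩ := prodTerm_ne H hFb hh hy
    rw [Finset.mem_coe, Finset.mem_product, Finset.mem_Icc, Finset.mem_Icc]
    omega
  have stepL2 : prodCoeff gr ⇑D (pmulP gr ⇑D f g) h n m
      = ∑ x ∈ Finset.Icc (df - (m : ℤ)) (n + 4 * m - dg - dh) ×ˢ
          Finset.Icc (dg - (m : ℤ)) (n + 4 * m - df - dh),
          ∑ k ∈ Finset.Icc (dh - (m : ℤ)) (n + 4 * m - df - dg),
            WL gr D f g h n m x.1 x.2 k := by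
    rw [stepL1]
    rw [sum_congr rfl (fun y hy => by
      have hy1 : y.1 ≤ n + 2 * (m : ℤ) - dh := by
        rw [Finset.mem_product, Finset.mem_Icc, Finset.mem_Icc] at hy
        exact hy.1.2
      exact expandL n m H hf hg hh y.1 y.2 hy1)]
    rw [Finset.sum_comm]
    refine sum_congr rfl fun x hx => ?_
    simp only [Finset.sum_product]
    rw [Finset.sum_comm]
    exact sum_congr rfl fun k _ => claimL n m H hf hg hh x.1 x.2 k
  have stepR2 : prodCoeff gr ⇑D f (pmulP gr ⇑D g h) n m
      = ∑ x ∈ Finset.Icc (dg - (m : ℤ)) (n + 4 * m - df - dh) ×ˢ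
          Finset.Icc (dh - (m : ℤ)) (n + 4 * m - df - dg),
          ∑ i ∈ Finset.Icc (df - (m : ℤ)) (n + 2 * m - dg - dh),
            WL gr D f g h n m i x.1 x.2 := by
    have stepR1 : prodCoeff gr ⇑D f (pmulP gr ⇑D g h) n m
        = ∑ y ∈ Finset.Icc (df - (m : ℤ)) (n + 2 * m - dg - dh) ×ˢ
            Finset.Icc (dg + dh - 3 * (m : ℤ)) (n + 2 * m - df),
            prodTerm gr ⇑D f (pmulP gr ⇑D g h) n m y := by
      refine prodCoeff_eq_sum _ ?_
      intro y hy
      obtain ⟨-, e1, e2, e3, e4, -⟩ := prodTerm_ne H hf hGb hy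
      rw [Finset.mem_coe, Finset.mem_product, Finset.mem_Icc, Finset.mem_Icc]
      omega
    rw [stepR1]
    rw [sum_congr rfl (fun y hy => by
      have hy2 : y.2 ≤ n + 2 * (m : ℤ) - df := by
        rw [Finset.mem_product, Finset.mem_Icc, Finset.mem_Icc] at hy
        exact hy.2.2
      exact expandR n m H hf hg hh y.1 y.2 hy2)]
    rw [Finset.sum_comm]
    refine sum_congr rfl fun x hx => ?_
    simp only [Finset.sum_product]
    refine sum_congr rfl fun i _ => ?_
    rw [claimR n m H hf hg hh i x.1 x.2, ← WL_eq_WR]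
  rw [stepL2, stepR2]
  -- shrink both sides to the common small box and reorder
  have hshrinkL : ∑ x ∈ Finset.Icc (df - (m : ℤ)) (n + 4 * m - dg - dh) ×ˢ
          Finset.Icc (dg - (m : ℤ)) (n + 4 * m - df - dh),
          ∑ k ∈ Finset.Icc (dh - (m : ℤ)) (n + 4 * m - df - dg),
            WL gr D f g h n m x.1 x.2 k
      = ∑ x ∈ Finset.Icc (df - (m : ℤ)) (n + m - dg - dh) ×ˢ
          Finset.Icc (dg - (m : ℤ)) (n + m - df - dh),
          ∑ k ∈ Finset.Icc (dh - (m : ℤ)) (n + m - df - dg),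
            WL gr D f g h n m x.1 x.2 k := by
    have hin : ∀ x : ℤ × ℤ,
        ∑ k ∈ Finset.Icc (dh - (m : ℤ)) (n + 4 * m - df - dg),
          WL gr D f g h n m x.1 x.2 k
        = ∑ k ∈ Finset.Icc (dh - (m : ℤ)) (n + m - df - dg),
          WL gr D f g h n m x.1 x.2 k := by
      intro x
      refine (Finset.sum_subset (Finset.Icc_subset_Icc le_rfl (by omega)) ?_).symm
      intro k _ hk
      by_contra h0
      obtain ⟨-, -, -, -, b1, b2⟩ := WL_ne n m H hf hg hh x.1 x.2 k h0
      exact hk (Finset.mem_Icc.2 ⟨b1, b2⟩)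
    rw [sum_congr rfl fun x _ => hin x]
    refine (Finset.sum_subset (Finset.product_subset_product
      (Finset.Icc_subset_Icc le_rfl (by omega))
      (Finset.Icc_subset_Icc le_rfl (by omega))) ?_).symm
    intro x _ hx
    refine Finset.sum_eq_zero fun k _ => ?_
    by_contra h0
    obtain ⟨a1, a2, a3, a4, -, -⟩ := WL_ne n m H hf hg hh x.1 x.2 k h0
    exact hx (Finset.mem_product.2 ⟨Finset.mem_Icc.2 ⟨a1, a2⟩, Finset.mem_Icc.2 ⟨a3, a4⟩⟩)
  have hshrinkR : ∑ x ∈ Finset.Icc (dg - (m : ℤ)) (n + 4 * m - df - dh) ×ˢ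
          Finset.Icc (dh - (m : ℤ)) (n + 4 * m - df - dg),
          ∑ i ∈ Finset.Icc (df - (m : ℤ)) (n + 2 * m - dg - dh),
            WL gr D f g h n m i x.1 x.2
      = ∑ x ∈ Finset.Icc (dg - (m : ℤ)) (n + m - df - dh) ×ˢ
          Finset.Icc (dh - (m : ℤ)) (n + m - df - dg),
          ∑ i ∈ Finset.Icc (df - (m : ℤ)) (n + m - dg - dh),
            WL gr D f g h n m i x.1 x.2 := by
    have hin : ∀ x : ℤ × ℤ,
        ∑ i ∈ Finset.Icc (df - (m : ℤ)) (n + 2 * m - dg - dh),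
          WL gr D f g h n m i x.1 x.2
        = ∑ i ∈ Finset.Icc (df - (m : ℤ)) (n + m - dg - dh),
          WL gr D f g h n m i x.1 x.2 := by
      intro x
      refine (Finset.sum_subset (Finset.Icc_subset_Icc le_rfl (by omega)) ?_).symm
      intro i _ hi
      by_contra h0
      obtain ⟨b1, b2, -, -, -, -⟩ := WL_ne n m H hf hg hh i x.1 x.2 h0
      exact hi (Finset.mem_Icc.2 ⟨b1, b2⟩)
    rw [sum_congr rfl fun x _ => hin x]
    refine (Finset.sum_subset (Finset.product_subset_product
      (Finset.Icc_subset_Icc le_rfl (by omega))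
      (Finset.Icc_subset_Icc le_rfl (by omega))) ?_).symm
    intro x _ hx
    refine Finset.sum_eq_zero fun i _ => ?_
    by_contra h0
    obtain ⟨-, -, a1, a2, a3, a4⟩ := WL_ne n m H hf hg hh i x.1 x.2 h0
    exact hx (Finset.mem_product.2 ⟨Finset.mem_Icc.2 ⟨a1, a2⟩, Finset.mem_Icc.2 ⟨a3, a4⟩⟩)
  rw [hshrinkL, hshrinkR]
  simp only [Finset.sum_product]
  -- LHS: ∑ i ∑ j ∑ k, RHS: ∑ j ∑ k ∑ i
  rw [Finset.sum_comm (s := Finset.Icc (df - (m : ℤ)) (n + m - dg - dh))]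
  refine sum_congr rfl fun j _ => ?_
  rw [Finset.sum_comm]

lemma assocP (H : Gd gr D) {df dg dh : ℤ} (hf : HomBound gr f df)
    (hg : HomBound gr g dg) (hh : HomBound gr h dh) :
    pmulP gr ⇑D (pmulP gr ⇑D f g) h = pmulP gr ⇑D f (pmulP gr ⇑D g h) := by
  funext n
  refine H.hsep _ _ fun m => ?_
  rw [pmulP_spec H (homBound_pmulP H hf hg) hh,
    pmulP_spec H hf (homBound_pmulP H hg hh)]
  exact assoc_coeff n m H hf hg hh

end Assoc

lemma pmul_add_right (H : Gd gr D) {h : ℤ → R} {dh : ℤ} (hf : HomBound gr f df)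
    (hg : HomBound gr g dg) (hh : HomBound gr h dh) :
    pmulP gr ⇑D f (g + h) = pmulP gr ⇑D f g + pmulP gr ⇑D f h := by
  funext n
  refine H.hsep _ _ fun m => ?_
  rw [Pi.add_apply, map_add, pmulP_spec H hf hg, pmulP_spec H hf hh,
    pmulP_spec H hf (homBound_add hg hh)]
  calc prodCoeff gr ⇑D f (g + h) n m
      = ∑ᶠ p, (prodTerm gr ⇑D f g n m p + prodTerm gr ⇑D f h n m p) :=
        finsum_congr fun p => prodTerm_add_right n m p
    _ = prodCoeff gr ⇑D f g n m + prodCoeff gr ⇑D f h n m :=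
        finsum_add_distrib (prodTerm_finite H hf hg n m) (prodTerm_finite H hf hh n m)

lemma pmul_add_left (H : Gd gr D) {h : ℤ → R} {dh : ℤ} (hf : HomBound gr f df)
    (hg : HomBound gr g dg) (hh : HomBound gr h dh) :
    pmulP gr ⇑D (f + g) h = pmulP gr ⇑D f h + pmulP gr ⇑D g h := by
  funext n
  refine H.hsep _ _ fun m => ?_
  rw [Pi.add_apply, map_add, pmulP_spec H hf hh, pmulP_spec H hg hh,
    pmulP_spec H (homBound_add hf hg) hh]
  calc prodCoeff gr ⇑D (f + g) h n m
      = ∑ᶠ p, (prodTerm gr ⇑D f h n m p + prodTerm gr ⇑D g h n m p) :=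
        finsum_congr fun p => prodTerm_add_left n m p
    _ = prodCoeff gr ⇑D f h n m + prodCoeff gr ⇑D g h n m :=
        finsum_add_distrib (prodTerm_finite H hf hh n m) (prodTerm_finite H hg hh n m)

end TwoBKPAux


open TwoBKPPlus in
theorem pdo_second_type_is_ring {R : Type*} [CommRing R]
    (gr : ℕ → R →+ R) (D : Derivation ℤ R R)
    -- the `gr m` are orthogonal idempotent projections (onto the `𝒜_m`) …
    (hidem : ∀ (m : ℕ) (a : R), gr m (gr m a) = gr m a)
    (horth : ∀ (m m' : ℕ) (a : R), m ≠ m' → gr m (gr m' a) = 0)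
    -- … which separate points (an element is determined by its components) …
    (hsep : ∀ a b : R, (∀ m : ℕ, gr m a = gr m b) → a = b)
    -- … and are jointly complete: every family of homogeneous components
    -- comes from an element of `R = Π_j 𝒜_j`
    (hcomplete : ∀ c : ℕ → R, (∀ m : ℕ, gr m (c m) = c m) → ∃ a : R, ∀ m, gr m a = c m)
    -- `1 ∈ 𝒜_0`
    (hone : ∀ m : ℕ, gr m (1 : R) = if m = 0 then (1 : R) else 0)
    -- the grading is multiplicative: `𝒜_i·𝒜_j ⊆ 𝒜_{i+j}`
    (hmul : ∀ (m : ℕ) (a b : R),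
        gr m (a * b) = ∑ i ∈ Finset.range (m + 1), gr i a * gr (m - i) b)
    -- the derivation raises degrees by one: `D(𝒜_i) ⊆ 𝒜_{i+1}`
    (hD : ∀ (m : ℕ) (a : R), gr (m + 1) (D a) = D (gr m a))
    (hD0 : ∀ a : R, gr 0 (D a) = 0) :
    -- (1) for each power of `D` and each graded component only finitely many
    --     terms contribute
    (∀ f g : ℤ → R, IsPDOPlus gr f → IsPDOPlus gr g → ∀ (n : ℤ) (m : ℕ),
        (Function.support (prodTerm gr ⇑D f g n m)).Finite) ∧
    -- (2) the multiplication is well defined on `𝒟⁺`, i.e. the graded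
    --     components assemble to an element of `R`, and the product has the
    --     prescribed components
    (∀ f g : ℤ → R, IsPDOPlus gr f → IsPDOPlus gr g → ∀ n : ℤ,
        (∃ a : R, ∀ m : ℕ, gr m a = prodCoeff gr ⇑D f g n m) ∧
        (∀ m : ℕ, gr m (pmulP gr ⇑D f g n) = prodCoeff gr ⇑D f g n m)) ∧
    -- (3) `𝒟_k·𝒟_l ⊆ Π_{m ≥ k+l} 𝒟_m`  (in particular `𝒟⁺` is closed under
    --     multiplication)
    (∀ (f g : ℤ → R) (k l : ℤ), HomBound gr f k → HomBound gr g l →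
        HomBound gr (pmulP gr ⇑D f g) (k + l)) ∧
    -- (4) the multiplication is associative
    (∀ f g h : ℤ → R, IsPDOPlus gr f → IsPDOPlus gr g → IsPDOPlus gr h →
        pmulP gr ⇑D (pmulP gr ⇑D f g) h = pmulP gr ⇑D f (pmulP gr ⇑D g h)) ∧
    -- (5) `1·D⁰` is a two-sided unit
    (∀ f : ℤ → R, IsPDOPlus gr f →
        pmulP gr ⇑D ponep f = f ∧ pmulP gr ⇑D f ponep = f) ∧
    -- (6) the multiplication distributes over (componentwise) addition,
    --     so `𝒟⁺` is a ring
    (∀ f g h : ℤ → R, IsPDOPlus gr f → IsPDOPlus gr g → IsPDOPlus gr h →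
        pmulP gr ⇑D f (g + h) = pmulP gr ⇑D f g + pmulP gr ⇑D f h ∧
        pmulP gr ⇑D (f + g) h = pmulP gr ⇑D f h + pmulP gr ⇑D g h) := by
  have H : TwoBKPAux.Gd gr D := ⟨hidem, horth, hsep, hcomplete, hone, hmul, hD, hD0⟩
  refine ⟨?_, ?_, ?_, ?_, ?_, ?_⟩
  · rintro f g ⟨df, hf⟩ ⟨dg, hg⟩ n m
    exact TwoBKPAux.prodTerm_finite H hf hg n m
  · rintro f g ⟨df, hf⟩ ⟨dg, hg⟩ n
    exact ⟨TwoBKPAux.pmulP_exists H hf hg n, fun m => TwoBKPAux.pmulP_spec H hf hg n m⟩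
  · intro f g k l hf hg
    exact TwoBKPAux.homBound_pmulP H hf hg
  · rintro f g h ⟨df, hf⟩ ⟨dg, hg⟩ ⟨dh, hh⟩
    exact TwoBKPAux.assocP H hf hg hh
  · rintro f ⟨df, hf⟩
    exact ⟨funext fun n => TwoBKPAux.punit_left H hf n, funext fun n => TwoBKPAux.punit_right H hf n⟩
  · rintro f g h ⟨df, hf⟩ ⟨dg, hg⟩ ⟨dh, hh⟩
    exact ⟨TwoBKPAux.pmul_add_right H hf hg hh, TwoBKPAux.pmul_add_left H hf hg hh⟩
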